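/- Let (Ω, ℱ, ℙ) be a probability space and let ε : Ω → (Fin m → ℝ) and ε' : Ω → (Fin d → ℝ) be random vectors such that the m + d real random variables (ε_1, …, ε_m, ε'_1, …, ε'_d) are mutually independent, each with mean 0, variance 1, and finite second moment (e.g., each distributed as the standard Gaussian gaussianReal 0 1). Let A be a real m×d matrix, A⁺ a real d×m matrix satisfying the four Penrose equations, S a real m×m matrix, α, β, γ nonnegative reals, and x ∈ ℝ^d. Define X := H·x + √γ • (A⁺·S·ε) + √β • ((1 − A⁺·A)·ε') where H := A⁺·A + α • (1 − A⁺·A). Then for all i, j ∈ Fin d, Cov(X_i, X_j) = (γ • (A⁺·(S·Sᵀ)·(A⁺)ᵀ) + β • (1 − A⁺·A))_{ij}. (Covariance of the SDB forward sample x_t | x_0 equals Σ_t = γ_t A⁺ΣA⁺ᵀ + β_t(I − A⁺A) when S·Sᵀ = Σ, part of the claim that x_t | x_0 ∼ N(H_t x_0, Σ_t).) -/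

import Mathlib

open scoped Matrix
open MeasureTheory ProbabilityTheory

/-- Covariance of the SDB forward sample `x_t | x_0` equals
`Σ_t = γ_t A⁺ΣA⁺ᵀ + β_t(I − A⁺A)` when `S·Sᵀ = Σ` (part of the claim that
`x_t | x_0 ∼ N(H_t x_0, Σ_t)`). -/
theorem sdb_forward_covariance
    {Ω : Type*} [MeasurableSpace Ω] (P : Measure Ω) [IsProbabilityMeasure P]
    (m d : ℕ)
    (ε : Ω → Fin m → ℝ) (ε' : Ω → Fin d → ℝ)
    (Z : Fin m ⊕ Fin d → Ω → ℝ)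
    (hZ : Z = Sum.elim (fun j ω => ε ω j) (fun k ω => ε' ω k))
    (hmeas : ∀ k : Fin m ⊕ Fin d, Measurable (Z k))
    (hL2 : ∀ k : Fin m ⊕ Fin d, MemLp (Z k) 2 P)
    (hmean : ∀ k : Fin m ⊕ Fin d, ∫ ω, Z k ω ∂P = 0)
    (hvar : ∀ k : Fin m ⊕ Fin d, variance (Z k) P = 1)
    (hindep : iIndepFun (m := fun _ : Fin m ⊕ Fin d => (inferInstance : MeasurableSpace ℝ)) Z P)
    (A : Matrix (Fin m) (Fin d) ℝ) (Ap : Matrix (Fin d) (Fin m) ℝ)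
    (h1 : A * Ap * A = A) (h2 : Ap * A * Ap = Ap)
    (h3 : (A * Ap)ᵀ = A * Ap) (h4 : (Ap * A)ᵀ = Ap * A)
    (S : Matrix (Fin m) (Fin m) ℝ)
    (α β γ : ℝ) (hα : 0 ≤ α) (hβ : 0 ≤ β) (hγ : 0 ≤ γ)
    (x : Fin d → ℝ)
    (H : Matrix (Fin d) (Fin d) ℝ)
    (hH : H = Ap * A + α • ((1 : Matrix (Fin d) (Fin d) ℝ) - Ap * A))
    (X : Ω → Fin d → ℝ)
    (hX : ∀ ω : Ω, X ω = H *ᵥ x + Real.sqrt γ • (Ap *ᵥ (S *ᵥ ε ω)) +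
      Real.sqrt β • (((1 : Matrix (Fin d) (Fin d) ℝ) - Ap * A) *ᵥ ε' ω)) :
    ∀ i j : Fin d,
      (∫ ω, (X ω i - ∫ ω', X ω' i ∂P) * (X ω j - ∫ ω', X ω' j ∂P) ∂P) =
        (γ • (Ap * (S * Sᵀ) * Apᵀ) +
          β • ((1 : Matrix (Fin d) (Fin d) ℝ) - Ap * A)) i j := by
  classical
  intro i j
  set Q : Matrix (Fin d) (Fin d) ℝ := (1 : Matrix (Fin d) (Fin d) ℝ) - Ap * A with hQ
  set B : Fin d → (Fin m ⊕ Fin d) → ℝ :=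
    fun i => Sum.elim (fun k => Real.sqrt γ * (Ap * S) i k)
      (fun k => Real.sqrt β * Q i k) with hB
  -- integrability facts
  have hZint : ∀ k, Integrable (Z k) P := fun k => (hL2 k).integrable one_le_two
  have hZmul : ∀ k l, Integrable (fun ω => Z k ω * Z l ω) P := by
    intro k l
    have h : MemLp (Z k • Z l) 1 P :=
      (hL2 l).smul (hL2 k)
    rw [memLp_one_iff_integrable] at h
    exact h
  -- second moments
  have hZZ : ∀ k l, ∫ ω, Z k ω * Z l ω ∂P = if k = l then 1 else 0 := by
    intro k l
    by_cases h : k = l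
    · subst h
      simp only [if_true]
      have hv := variance_eq_sub (hL2 k)
      rw [hvar k, hmean k] at hv
      have : ∫ ω, Z k ω * Z k ω ∂P = ∫ ω, (Z k ω) ^ 2 ∂P := by
        congr 1; ext ω; ring
      rw [this]
      have : P[Z k ^ 2] = ∫ ω, (Z k ω) ^ 2 ∂P := by
        congr 1
      rw [this] at hv
      linarith
    · simp only [h, if_false]
      have hind : IndepFun (Z k) (Z l) P := hindep.indepFun h
      have := hind.integral_mul_eq_mul_integral (hmeas k).aestronglyMeasurable (hmeas l).aestronglyMeasurable
      have h2 : ∫ ω, Z k ω * Z l ω ∂P = (∫ ω, Z k ω ∂P) * ∫ ω, Z l ω ∂P := by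
        simpa [Pi.mul_apply] using this
      rw [h2, hmean k, hmean l, mul_zero]
  -- decomposition of X
  have hXd : ∀ ω (i : Fin d), X ω i = (H *ᵥ x) i + ∑ k, B i k * Z k ω := by
    intro ω i
    rw [hX ω]
    simp only [Pi.add_apply, Pi.smul_apply, smul_eq_mul, Matrix.mulVec_mulVec]
    rw [hB, hZ]
    rw [Fintype.sum_sum_type]
    simp only [Sum.elim_inl, Sum.elim_inr]
    have e1 : ((Ap * S) *ᵥ ε ω) i = ∑ k, (Ap * S) i k * ε ω k := by
      simp [Matrix.mulVec, dotProduct]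
    have e2 : (Q *ᵥ ε' ω) i = ∑ k, Q i k * ε' ω k := by
      simp [Matrix.mulVec, dotProduct]
    rw [e1, e2]
    simp only [Finset.mul_sum, mul_assoc]
    ring
  -- means
  have hBint : ∀ i : Fin d, Integrable (fun ω => ∑ k, B i k * Z k ω) P := fun i =>
    integrable_finset_sum _ fun k _ => (hZint k).const_mul _
  have hmeanX : ∀ i : Fin d, ∫ ω, X ω i ∂P = (H *ᵥ x) i := by
    intro i
    have hfun : (fun ω => X ω i) = fun ω => (H *ᵥ x) i + ∑ k, B i k * Z k ω := by
      funext ω; exact hXd ω i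
    rw [hfun, integral_add (integrable_const _) (hBint i), integral_const,
      integral_finset_sum _ fun k _ => (hZint k).const_mul _]
    simp [hmean, integral_const_mul]
  -- expand the covariance integrand
  have key : ∀ ω : Ω, (X ω i - ∫ ω', X ω' i ∂P) * (X ω j - ∫ ω', X ω' j ∂P)
      = ∑ k, ∑ l, (B i k * B j l) * (Z k ω * Z l ω) := by
    intro ω
    rw [hmeanX i, hmeanX j, hXd ω i, hXd ω j]
    simp only [add_sub_cancel_left]
    rw [Finset.sum_mul_sum]
    refine Finset.sum_congr rfl fun k _ => Finset.sum_congr rfl fun l _ => by ring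
  have hint : (∫ ω, (X ω i - ∫ ω', X ω' i ∂P) * (X ω j - ∫ ω', X ω' j ∂P) ∂P)
      = ∑ k, B i k * B j k := by
    simp_rw [key]
    rw [integral_finset_sum _ fun k _ =>
      integrable_finset_sum _ fun l _ => (hZmul k l).const_mul _]
    have : ∀ k, ∫ ω, ∑ l, (B i k * B j l) * (Z k ω * Z l ω) ∂P
        = ∑ l, (B i k * B j l) * ∫ ω, Z k ω * Z l ω ∂P := by
      intro k
      rw [integral_finset_sum _ fun l _ => (hZmul k l).const_mul _]
      exact Finset.sum_congr rfl fun l _ => integral_const_mul _ _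
    simp_rw [this, hZZ]
    simp
  rw [hint]
  -- matrix algebra
  have hγ' : Real.sqrt γ * Real.sqrt γ = γ := Real.mul_self_sqrt hγ
  have hβ' : Real.sqrt β * Real.sqrt β = β := Real.mul_self_sqrt hβ
  have hQT : Qᵀ = Q := by
    rw [hQ, Matrix.transpose_sub, Matrix.transpose_one, h4]
  have hPP : Ap * A * (Ap * A) = Ap * A := by rw [← Matrix.mul_assoc, h2]
  have hQQ : Q * Q = Q := by
    rw [hQ, sub_mul, mul_sub, mul_sub, hPP]
    simp only [one_mul, mul_one]
    abel
  have hAS : (Ap * S) * (Ap * S)ᵀ = Ap * (S * Sᵀ) * Apᵀ := by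
    simp [Matrix.transpose_mul, Matrix.mul_assoc]
  rw [Fintype.sum_sum_type]
  simp only [hB, Sum.elim_inl, Sum.elim_inr]
  have e1 : ∑ k : Fin m, (Real.sqrt γ * (Ap * S) i k) * (Real.sqrt γ * (Ap * S) j k)
      = γ * (Ap * (S * Sᵀ) * Apᵀ) i j := by
    rw [← hAS]
    simp only [Matrix.mul_apply, Matrix.transpose_apply]
    rw [Finset.mul_sum]
    refine Finset.sum_congr rfl fun k _ => ?_
    rw [mul_mul_mul_comm, hγ']
  have e2 : ∑ k : Fin d, (Real.sqrt β * Q i k) * (Real.sqrt β * Q j k)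
      = β * Q i j := by
    have hq : Q i j = (Q * Qᵀ) i j := by rw [hQT, hQQ]
    rw [hq]
    simp only [Matrix.mul_apply, Matrix.transpose_apply]
    rw [Finset.mul_sum]
    refine Finset.sum_congr rfl fun k _ => ?_
    rw [mul_mul_mul_comm, hβ']
  rw [e1, e2]
  simp [Matrix.add_apply, Matrix.smul_apply, smul_eq_mul, hQ]
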